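/- Let R be a commutative domain over a field of characteristic zero, δ a locally nilpotent derivation of R, and f, g ∈ R. If f divides δ(g) and g divides δ(f), then δ(f) = 0 or δ(g) = 0. -/
import Mathlib

open Finset

private theorem lnd_iterate_leibniz {K R : Type*} [CommRing K]
    [CommRing R] [Algebra K R] (δ : Derivation K R R) (n : ℕ) (p q : R) :
    (⇑δ)^[n] (p * q) =
      ∑ k ∈ range n.succ, (n.choose k • ((⇑δ)^[n - k] p * (⇑δ)^[k] q)) := by
  induction n with
  | zero => simp [Finset.range]
  | succ n IH =>
    calc
      (⇑δ)^[n + 1] (p * q) =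
          δ (∑ k ∈ range n.succ,
              n.choose k • ((⇑δ)^[n - k] p * (⇑δ)^[k] q)) := by
        rw [Function.iterate_succ_apply', IH]
      _ = (∑ k ∈ range n.succ,
            n.choose k • ((⇑δ)^[n - k + 1] p * (⇑δ)^[k] q)) +
          ∑ k ∈ range n.succ,
            n.choose k • ((⇑δ)^[n - k] p * (⇑δ)^[k + 1] q) := by
        rw [map_sum, ← sum_add_distrib]
        refine sum_congr rfl fun k _ => ?_
        rw [Function.iterate_succ_apply', Function.iterate_succ_apply']
        simp only [Derivation.map_smul_of_tower, Derivation.leibniz, smul_eq_mul, nsmul_eq_mul,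
          Derivation.map_natCast, mul_zero, add_zero]
        ring
      _ = (∑ k ∈ range n.succ,
                n.choose k.succ • ((⇑δ)^[n - k] p * (⇑δ)^[k + 1] q)) +
              1 • ((⇑δ)^[n + 1] p * (⇑δ)^[0] q) +
            ∑ k ∈ range n.succ, n.choose k • ((⇑δ)^[n - k] p * (⇑δ)^[k + 1] q) :=
        ?_
      _ = ((∑ k ∈ range n.succ, n.choose k • ((⇑δ)^[n - k] p * (⇑δ)^[k + 1] q)) +
              ∑ k ∈ range n.succ,
                n.choose k.succ • ((⇑δ)^[n - k] p * (⇑δ)^[k + 1] q)) +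
            1 • ((⇑δ)^[n + 1] p * (⇑δ)^[0] q) := by
        rw [add_comm, add_assoc]
      _ = (∑ i ∈ range n.succ,
              (n + 1).choose (i + 1) • ((⇑δ)^[n + 1 - (i + 1)] p * (⇑δ)^[i + 1] q)) +
            1 • ((⇑δ)^[n + 1] p * (⇑δ)^[0] q) := by
        simp_rw [Nat.choose_succ_succ, Nat.succ_sub_succ, add_smul, sum_add_distrib]
      _ = ∑ k ∈ range n.succ.succ,
            n.succ.choose k • ((⇑δ)^[n.succ - k] p * (⇑δ)^[k] q) := by
        rw [sum_range_succ' _ n.succ, Nat.choose_zero_right, tsub_zero]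
    congr
    refine (sum_range_succ' _ _).trans (congr_arg₂ (· + ·) ?_ ?_)
    · rw [sum_range_succ, Nat.choose_succ_self, zero_smul, add_zero]
      refine sum_congr rfl fun k hk => ?_
      rw [mem_range] at hk
      congr
      omega
    · rw [Nat.choose_zero_right, tsub_zero]

/-- If `δ` is a locally nilpotent derivation of a commutative domain over a field of
characteristic zero, `f ∣ δ g` and `g ∣ δ f`, then `δ f = 0` or `δ g = 0`. -/
theorem lnd_dvd_pair {K R : Type*} [Field K] [CharZero K]
    [CommRing R] [IsDomain R] [Algebra K R]
    (δ : Derivation K R R)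
    (hln : ∀ f : R, ∃ m : ℕ, (δ.toLinearMap ^ m) f = 0)
    (f g : R) (hf : f ∣ δ g) (hg : g ∣ δ f) :
    δ f = 0 ∨ δ g = 0 := by
  haveI : CharZero R := charZero_of_injective_algebraMap (algebraMap K R).injective
  by_contra hc
  rw [not_or] at hc
  obtain ⟨hdf0, hdg0⟩ := hc
  have hln' : ∀ x : R, ∃ m : ℕ, (⇑δ)^[m] x = 0 := by
    intro x
    obtain ⟨m, hm⟩ := hln x
    exact ⟨m, by simpa [Module.End.pow_apply] using hm⟩
  have hmono : ∀ (x : R) (a b : ℕ), a ≤ b → (⇑δ)^[a] x = 0 → (⇑δ)^[b] x = 0 := by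
    intro x a b hab h
    obtain ⟨c, rfl⟩ := Nat.exists_eq_add_of_le hab
    rw [add_comm, Function.iterate_add_apply, h]
    exact Function.iterate_fixed (map_zero δ) c
  have hdeg : ∀ x : R, x ≠ 0 → ∃ d : ℕ, (⇑δ)^[d] x ≠ 0 ∧ (⇑δ)^[d + 1] x = 0 := by
    classical
    intro x hx
    have hex : ∃ m : ℕ, (⇑δ)^[m] x = 0 := hln' x
    have hN := Nat.find_spec hex
    have hN0 : Nat.find hex ≠ 0 := by
      intro h0
      rw [h0] at hN
      exact hx hN
    refine ⟨Nat.find hex - 1, Nat.find_min hex (by omega), ?_⟩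
    have h1 : Nat.find hex - 1 + 1 = Nat.find hex := by omega
    rwa [h1]
  have hmul : ∀ (p q : R) (dp dq : ℕ), (⇑δ)^[dp] p ≠ 0 → (⇑δ)^[dp + 1] p = 0 →
      (⇑δ)^[dq] q ≠ 0 → (⇑δ)^[dq + 1] q = 0 → (⇑δ)^[dp + dq] (p * q) ≠ 0 := by
    intro p q dp dq hp hp1 hq hq1
    rw [lnd_iterate_leibniz]
    rw [Finset.sum_eq_single dq]
    · have hsub : dp + dq - dq = dp := by omega
      rw [hsub, nsmul_eq_mul]
      exact mul_ne_zero
        (Nat.cast_ne_zero.mpr (Nat.choose_pos (Nat.le_add_left dq dp)).ne')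
        (mul_ne_zero hp hq)
    · intro k hk hkne
      rw [mem_range] at hk
      rcases lt_or_gt_of_ne hkne with h | h
      · rw [hmono p (dp + 1) (dp + dq - k) (by omega) hp1, zero_mul, smul_zero]
      · rw [hmono q (dq + 1) k (by omega) hq1, mul_zero, smul_zero]
    · intro h
      exact absurd (mem_range.mpr (by omega)) h
  obtain ⟨c, hcf⟩ := hf
  obtain ⟨d, hdg⟩ := hg
  have hfne : f ≠ 0 := by rintro rfl; rw [zero_mul] at hcf; exact hdg0 hcf
  have hcne : c ≠ 0 := by rintro rfl; rw [mul_zero] at hcf; exact hdg0 hcf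
  have hgne : g ≠ 0 := by rintro rfl; rw [zero_mul] at hdg; exact hdf0 hdg
  have hdne : d ≠ 0 := by rintro rfl; rw [mul_zero] at hdg; exact hdf0 hdg
  obtain ⟨Df, hDf, hDf1⟩ := hdeg f hfne
  obtain ⟨Dg, hDg, hDg1⟩ := hdeg g hgne
  obtain ⟨Dc, hDc, hDc1⟩ := hdeg c hcne
  obtain ⟨Dd, hDd, hDd1⟩ := hdeg d hdne
  have h1 : (⇑δ)^[Df + Dc + 1] g ≠ 0 := by
    rw [Function.iterate_succ_apply]
    show (⇑δ)^[Df + Dc] (δ g) ≠ 0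
    rw [hcf]
    exact hmul f c Df Dc hDf hDf1 hDc hDc1
  have h2 : Df + Dc + 1 ≤ Dg := by
    by_contra h
    exact h1 (hmono g (Dg + 1) (Df + Dc + 1) (by omega) hDg1)
  have h3 : (⇑δ)^[Dg + Dd + 1] f ≠ 0 := by
    rw [Function.iterate_succ_apply]
    show (⇑δ)^[Dg + Dd] (δ f) ≠ 0
    rw [hdg]
    exact hmul g d Dg Dd hDg hDg1 hDd hDd1
  have h4 : Dg + Dd + 1 ≤ Df := by
    by_contra h
    exact h3 (hmono f (Df + 1) (Dg + Dd + 1) (by omega) hDf1)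
  omega
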